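/- A graded poset P is half-Eulerian (i.e., (1/2)-Eulerian) if and only if: (1) in every interval [x,y] of odd rank, the number of elements of even relative rank equals the number of elements of odd relative rank; and (2) in every interval [x,y] of even rank, the number of elements z ∈ [x,y] with ρ(x,z) even exceeds the number with ρ(x,z) odd by exactly one. -/
import Mathlib


open scoped Classical

attribute [local instance] Fintype.ofFinite

/-- A rank function making a bounded poset graded of rank `n+1`. -/
def IsGraded (P : Type) [PartialOrder P] [BoundedOrder P] (ρ : P → ℕ) (n : ℕ) : Prop :=
  ρ ⊥ = 0 ∧ ρ ⊤ = n + 1 ∧ ∀ x y : P, x ⋖ y → ρ y = ρ x + 1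

/-- A poset is `r`-thick if every nonempty open interval has at least `r` elements. -/
def RThick (P : Type) [PartialOrder P] [Fintype P] (r : ℕ) : Prop :=
  ∀ x y : P, x < y → (∃ z, x < z ∧ z < y) →
    r ≤ (Finset.univ.filter fun z => x < z ∧ z < y).card

/-- The flag number `f_S(P)`: the number of chains of `P` whose set of ranks is `S`. -/
noncomputable def flagNum {P : Type} [PartialOrder P] [Fintype P] (ρ : P → ℕ)
    (S : Finset ℕ) : ℕ :=
  (Finset.univ.filter fun c : Finset P =>
    IsChain (· ≤ ·) (c : Set P) ∧ c.image ρ = S ∧ c.card = S.card).card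

/-- The flag number `f_S([x,y])` of the interval `[x,y]`, with ranks relative to `x`. -/
noncomputable def flagNumI {P : Type} [PartialOrder P] [Fintype P] (ρ : P → ℕ)
    (x y : P) (S : Finset ℕ) : ℕ :=
  (Finset.univ.filter fun c : Finset P =>
    IsChain (· ≤ ·) (c : Set P) ∧ (∀ z ∈ c, x < z ∧ z < y) ∧
      c.image (fun z => ρ z - ρ x) = S ∧ c.card = S.card).card

/-- The `k`-Möbius function `μ_k([x,y])`. -/
noncomputable def muk {P : Type} [PartialOrder P] [Fintype P] (k : ℝ) (x : P) (y : P) : ℝ :=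
  if x = y then 1
  else -1 - (1/k) * ∑ z ∈ (Finset.univ.filter fun z => x < z ∧ z < y).attach,
    muk k x z.val
termination_by (Finset.univ.filter fun w => w < y).card
decreasing_by
  have hz : (z : P) < y := (Finset.mem_filter.mp z.2).2.2
  apply Finset.card_lt_card
  rw [Finset.ssubset_iff_of_subset]
  · exact ⟨z, Finset.mem_filter.mpr ⟨Finset.mem_univ _, hz⟩,
      fun hc => absurd (Finset.mem_filter.mp hc).2 (lt_irrefl _)⟩
  · intro w hw
    exact Finset.mem_filter.mpr ⟨Finset.mem_univ _, (Finset.mem_filter.mp hw).2.trans hz⟩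

/-- The ordinary Möbius function of a finite poset. -/
noncomputable def mobius {P : Type} [PartialOrder P] [Fintype P] (x : P) (y : P) : ℤ :=
  if x = y then 1
  else -∑ z ∈ (Finset.univ.filter fun z => x ≤ z ∧ z < y).attach, mobius x z.val
termination_by (Finset.univ.filter fun w => w < y).card
decreasing_by
  have hz : (z : P) < y := (Finset.mem_filter.mp z.2).2.2
  apply Finset.card_lt_card
  rw [Finset.ssubset_iff_of_subset]
  · exact ⟨z, Finset.mem_filter.mpr ⟨Finset.mem_univ _, hz⟩,
      fun hc => absurd (Finset.mem_filter.mp hc).2 (lt_irrefl _)⟩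
  · intro w hw
    exact Finset.mem_filter.mpr ⟨Finset.mem_univ _, (Finset.mem_filter.mp hw).2.trans hz⟩

/-- A graded poset is `k`-Eulerian when `μ_k([x,y]) = (-1)^{ρ(y)-ρ(x)}` on every interval. -/
def IsKEulerian (P : Type) [PartialOrder P] [Fintype P] (ρ : P → ℕ) (k : ℝ) : Prop :=
  ∀ x y : P, x ≤ y → muk k x y = (-1 : ℝ) ^ (ρ y - ρ x)

/-- The flag `L^k` vector of a poset of rank `n+1`. -/
noncomputable def Lk {P : Type} [PartialOrder P] [Fintype P] (k : ℝ) (n : ℕ) (ρ : P → ℕ)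
    (S : Finset ℕ) : ℝ :=
  (-1 : ℝ) ^ (n - S.card) *
    ∑ T ∈ (Finset.Icc 1 n).powerset.filter (fun T => Finset.Icc 1 n \ S ⊆ T),
      (-(1/(2*k))) ^ T.card * (flagNum ρ T : ℝ)

/-- The flag `L^k` vector of an interval `[x,y]` of rank `n+1`. -/
noncomputable def LkI {P : Type} [PartialOrder P] [Fintype P] (k : ℝ) (n : ℕ) (ρ : P → ℕ)
    (x y : P) (S : Finset ℕ) : ℝ :=
  (-1 : ℝ) ^ (n - S.card) *
    ∑ T ∈ (Finset.Icc 1 n).powerset.filter (fun T => Finset.Icc 1 n \ S ⊆ T),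
      (-(1/(2*k))) ^ T.card * (flagNumI ρ x y T : ℝ)

/-- A set is even if it is a disjoint union of intervals of even cardinality. -/
def IsEvenSet (S : Finset ℕ) : Prop :=
  ∃ J : Finset (ℕ × ℕ),
    S = J.biUnion (fun p => Finset.Icc p.1 p.2) ∧
    (∀ p ∈ J, p.1 ≤ p.2 ∧ Even (p.2 + 1 - p.1)) ∧
    (∀ p ∈ J, ∀ q ∈ J, p ≠ q → Disjoint (Finset.Icc p.1 p.2) (Finset.Icc q.1 q.2))

/-- The horizontal `r`-fold duplication `D^r P`. -/
inductive Dup (P : Type) [PartialOrder P] [BoundedOrder P] (r : ℕ) : Type where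
  | bot : Dup P r
  | top : Dup P r
  | mid : {x : P // x ≠ ⊥ ∧ x ≠ ⊤} → Fin r → Dup P r

namespace Dup

variable {P : Type} [PartialOrder P] [BoundedOrder P] {r : ℕ}

def le : Dup P r → Dup P r → Prop
  | .bot, _ => True
  | .mid _ _, .bot => False
  | .mid x i, .mid y j => (x = y ∧ i = j) ∨ (x : P) < (y : P)
  | .mid _ _, .top => True
  | .top, .top => True
  | .top, _ => False

instance : PartialOrder (Dup P r) where
  le := Dup.le
  le_refl a := by cases a with
    | bot => trivial
    | top => trivial
    | mid x i => exact Or.inl ⟨rfl, rfl⟩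
  le_trans a b c hab hbc := by
    cases a with
    | bot => trivial
    | top =>
      cases b with
      | top =>
        cases c with
        | top => trivial
        | bot => exact hbc.elim
        | mid _ _ => exact hbc.elim
      | bot => exact hab.elim
      | mid _ _ => exact hab.elim
    | mid x i =>
      cases b with
      | bot => exact hab.elim
      | top =>
        cases c with
        | top => trivial
        | bot => exact hbc.elim
        | mid _ _ => exact hbc.elim
      | mid y j =>
        cases c with
        | bot => exact hbc.elim
        | top => trivial
        | mid z l =>
          rcases hab with ⟨rfl, rfl⟩ | h1
          · exact hbc
          · rcases hbc with ⟨rfl, rfl⟩ | h2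
            · exact Or.inr h1
            · exact Or.inr (h1.trans h2)
  le_antisymm a b hab hba := by
    cases a with
    | bot =>
      cases b with
      | bot => rfl
      | top => exact hba.elim
      | mid _ _ => exact hba.elim
    | top =>
      cases b with
      | top => rfl
      | bot => exact hab.elim
      | mid _ _ => exact hab.elim
    | mid x i =>
      cases b with
      | bot => exact hab.elim
      | top => exact hba.elim
      | mid y j =>
        rcases hab with ⟨rfl, rfl⟩ | h1
        · rfl
        · rcases hba with ⟨rfl, rfl⟩ | h2
          · exact absurd h1 (lt_irrefl _)
          · exact absurd (h1.trans h2) (lt_irrefl _)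

instance : BoundedOrder (Dup P r) where
  top := .top
  bot := .bot
  le_top a := by cases a <;> trivial
  bot_le a := trivial

instance [Finite P] : Finite (Dup P r) :=
  Finite.of_injective
    (fun a : Dup P r =>
      (match a with
        | .bot => none
        | .top => some none
        | .mid x i => some (some (x, i)) :
        Option (Option ({x : P // x ≠ ⊥ ∧ x ≠ ⊤} × Fin r))))
    (by intro a b h; cases a <;> cases b <;> simp_all)

/-- The rank function of `D^r P`, where `P` has rank `n+1`. -/
def rank (ρ : P → ℕ) (n : ℕ) : Dup P r → ℕ
  | .bot => 0
  | .top => n + 1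
  | .mid x _ => ρ x.val

/-- `a ∈ D^r P` is a copy of `x ∈ P`. -/
def IsCopy (a : Dup P r) (x : P) : Prop :=
  (x = ⊥ ∧ a = .bot) ∨ (x = ⊤ ∧ a = .top) ∨ ∃ h i, a = .mid ⟨x, h⟩ i

end Dup


section Helpers

variable {P : Type} [PartialOrder P] [Fintype P]

private lemma aux_card_lt {z y : P} (h : z < y) :
    (Finset.univ.filter fun w => w < z).card < (Finset.univ.filter fun w => w < y).card := by
  apply Finset.card_lt_card
  rw [Finset.ssubset_iff_of_subset]
  · exact ⟨z, Finset.mem_filter.mpr ⟨Finset.mem_univ _, h⟩,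
      fun hc => absurd (Finset.mem_filter.mp hc).2 (lt_irrefl _)⟩
  · intro w hw
    exact Finset.mem_filter.mpr ⟨Finset.mem_univ _, (Finset.mem_filter.mp hw).2.trans h⟩

private lemma closed_eq {x y : P} (h : x < y) :
    (Finset.univ.filter fun z => x ≤ z ∧ z ≤ y) =
      insert x (insert y (Finset.univ.filter fun z => x < z ∧ z < y)) := by
  ext z
  simp only [Finset.mem_filter, Finset.mem_univ, true_and, Finset.mem_insert]
  constructor
  · rintro ⟨h1, h2⟩
    rcases h1.lt_or_eq with h1' | rfl
    · rcases h2.lt_or_eq with h2' | rfl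
      · exact Or.inr (Or.inr ⟨h1', h2'⟩)
      · exact Or.inr (Or.inl rfl)
    · exact Or.inl rfl
  · rintro (rfl | rfl | ⟨h1, h2⟩)
    · exact ⟨le_refl _, h.le⟩
    · exact ⟨h.le, le_refl _⟩
    · exact ⟨h1.le, h2.le⟩

private lemma closed_sum {x y : P} (h : x < y) (f : P → ℝ) :
    (∑ z ∈ Finset.univ.filter (fun z => x ≤ z ∧ z ≤ y), f z) =
      f x + f y + ∑ z ∈ Finset.univ.filter (fun z => x < z ∧ z < y), f z := by
  rw [closed_eq h, Finset.sum_insert, Finset.sum_insert]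
  · ring
  · simp [lt_irrefl]
  · simp only [Finset.mem_insert, Finset.mem_filter, Finset.mem_univ, true_and, not_or]
    exact ⟨h.ne, fun hc => absurd hc.1 (lt_irrefl _)⟩

private lemma parity_sum (ρ : P → ℕ) (x y : P) :
    (∑ z ∈ Finset.univ.filter (fun z => x ≤ z ∧ z ≤ y), (-1 : ℝ) ^ (ρ z - ρ x)) =
      ((Finset.univ.filter fun z => x ≤ z ∧ z ≤ y ∧ Even (ρ z - ρ x)).card : ℝ) -
      ((Finset.univ.filter fun z => x ≤ z ∧ z ≤ y ∧ Odd (ρ z - ρ x)).card : ℝ) := by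
  rw [← Finset.sum_filter_add_sum_filter_not _ (fun z => Even (ρ z - ρ x))]
  simp only [Finset.filter_filter, Nat.not_even_iff_odd, and_assoc]
  have hE : ∀ s : Finset P, (∀ z ∈ s, Even (ρ z - ρ x)) →
      ∑ z ∈ s, (-1 : ℝ) ^ (ρ z - ρ x) = s.card := by
    intro s hs
    rw [Finset.sum_congr (g := fun _ => (1 : ℝ)) rfl (fun z hz => (hs z hz).neg_one_pow)]
    simp
  have hO : ∀ s : Finset P, (∀ z ∈ s, Odd (ρ z - ρ x)) →
      ∑ z ∈ s, (-1 : ℝ) ^ (ρ z - ρ x) = -(s.card : ℝ) := by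
    intro s hs
    rw [Finset.sum_congr (g := fun _ => (-1 : ℝ)) rfl (fun z hz => (hs z hz).neg_one_pow)]
    simp
  rw [hE _ (fun z hz => (Finset.mem_filter.mp hz).2.2.2),
      hO _ (fun z hz => (Finset.mem_filter.mp hz).2.2.2)]
  ring

private lemma closed_self (x : P) :
    (Finset.univ.filter fun z => x ≤ z ∧ z ≤ x) = {x} := by
  ext z
  simp only [Finset.mem_filter, Finset.mem_univ, true_and, Finset.mem_singleton]
  constructor
  · rintro ⟨a, b⟩; exact le_antisymm b a
  · rintro rfl; exact ⟨le_rfl, le_rfl⟩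

end Helpers

/-- characterization of half-Eulerian posets by counting elements of
even and odd relative rank in intervals. -/
theorem isHalfEulerian_iff {P : Type} [PartialOrder P] [BoundedOrder P] [Finite P]
    (n : ℕ) (ρ : P → ℕ) (hP : IsGraded P ρ n) :
    IsKEulerian P ρ (1/2) ↔
      ((∀ x y : P, x ≤ y → Odd (ρ y - ρ x) →
          (Finset.univ.filter fun z => x ≤ z ∧ z ≤ y ∧ Even (ρ z - ρ x)).card =
          (Finset.univ.filter fun z => x ≤ z ∧ z ≤ y ∧ Odd (ρ z - ρ x)).card) ∧
       (∀ x y : P, x ≤ y → Even (ρ y - ρ x) →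
          (Finset.univ.filter fun z => x ≤ z ∧ z ≤ y ∧ Even (ρ z - ρ x)).card =
          (Finset.univ.filter fun z => x ≤ z ∧ z ≤ y ∧ Odd (ρ z - ρ x)).card + 1)) := by
  constructor
  · intro hE
    have key : ∀ x y : P, x ≤ y →
        (((Finset.univ.filter fun z => x ≤ z ∧ z ≤ y ∧ Even (ρ z - ρ x)).card : ℝ) -
          ((Finset.univ.filter fun z => x ≤ z ∧ z ≤ y ∧ Odd (ρ z - ρ x)).card : ℝ)) =
          (1 + (-1 : ℝ) ^ (ρ y - ρ x)) / 2 := by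
      intro x y hxy
      rw [← parity_sum ρ x y]
      rcases hxy.lt_or_eq with h | rfl
      · rw [closed_sum h]
        have hm := hE x y hxy
        rw [muk, if_neg h.ne, Finset.sum_attach] at hm
        have hs : (∑ z ∈ Finset.univ.filter (fun z => x < z ∧ z < y), muk (1/2 : ℝ) x z) =
            ∑ z ∈ Finset.univ.filter (fun z => x < z ∧ z < y), (-1 : ℝ) ^ (ρ z - ρ x) :=
          Finset.sum_congr rfl (fun z hz => hE x z (Finset.mem_filter.mp hz).2.1.le)
        rw [hs] at hm
        have h12 : (1 : ℝ) / (1/2) = 2 := by norm_num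
        rw [h12] at hm
        rw [Nat.sub_self, pow_zero]
        linarith
      · rw [closed_self, Finset.sum_singleton, Nat.sub_self, pow_zero]
        norm_num
    constructor
    · intro x y hxy hodd
      have k := key x y hxy
      rw [hodd.neg_one_pow] at k
      have : ((Finset.univ.filter fun z => x ≤ z ∧ z ≤ y ∧ Even (ρ z - ρ x)).card : ℝ) =
          ((Finset.univ.filter fun z => x ≤ z ∧ z ≤ y ∧ Odd (ρ z - ρ x)).card : ℝ) := by
        linarith
      exact_mod_cast this
    · intro x y hxy heven
      have k := key x y hxy
      rw [heven.neg_one_pow] at k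
      have : ((Finset.univ.filter fun z => x ≤ z ∧ z ≤ y ∧ Even (ρ z - ρ x)).card : ℝ) =
          ((Finset.univ.filter fun z => x ≤ z ∧ z ≤ y ∧ Odd (ρ z - ρ x)).card : ℝ) + 1 := by
        linarith
      exact_mod_cast this
  · rintro ⟨h1, h2⟩
    have key : ∀ N : ℕ, ∀ y x : P, (Finset.univ.filter fun w => w < y).card ≤ N → x ≤ y →
        muk (1/2 : ℝ) x y = (-1 : ℝ) ^ (ρ y - ρ x) := by
      intro N
      induction N with
      | zero =>
        intro y x hc hxy
        rcases hxy.lt_or_eq with h | rfl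
        · exfalso
          have : x ∈ Finset.univ.filter fun w => w < y :=
            Finset.mem_filter.mpr ⟨Finset.mem_univ _, h⟩
          have := Finset.card_pos.mpr ⟨x, this⟩
          omega
        · rw [muk, if_pos rfl, Nat.sub_self, pow_zero]
      | succ N ih =>
        intro y x hc hxy
        rcases hxy.lt_or_eq with h | rfl
        · rw [muk, if_neg h.ne, Finset.sum_attach]
          have hs : (∑ z ∈ Finset.univ.filter (fun z => x < z ∧ z < y), muk (1/2 : ℝ) x z) =
              ∑ z ∈ Finset.univ.filter (fun z => x < z ∧ z < y), (-1 : ℝ) ^ (ρ z - ρ x) :=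
            Finset.sum_congr rfl (fun z hz => by
              have hz' := (Finset.mem_filter.mp hz).2
              exact ih z x (Nat.lt_succ_iff.mp (lt_of_lt_of_le (aux_card_lt hz'.2) hc)) hz'.1.le)
          rw [hs]
          have hval : (∑ z ∈ Finset.univ.filter (fun z => x ≤ z ∧ z ≤ y), (-1 : ℝ) ^ (ρ z - ρ x)) =
              (1 + (-1 : ℝ) ^ (ρ y - ρ x)) / 2 := by
            rw [parity_sum]
            rcases Nat.even_or_odd (ρ y - ρ x) with he | ho
            · rw [he.neg_one_pow, h2 x y h.le he]
              push_cast
              ring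
            · rw [ho.neg_one_pow, h1 x y h.le ho]
              ring
          rw [closed_sum h, Nat.sub_self, pow_zero] at hval
          have h12 : (1 : ℝ) / (1/2) = 2 := by norm_num
          rw [h12]
          linarith
        · rw [muk, if_pos rfl, Nat.sub_self, pow_zero]
    intro x y hxy
    exact key ((Finset.univ.filter fun w => w < y).card) y x le_rfl hxy
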